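/- For positive reals z, z̄, ȳ, and a > 0, and y > 0, the inequality z·ln(1 + a/y) ≥ 2z̄·ln(1 + a/ȳ) + (z̄·a)/(a + ȳ)·(1 - y/ȳ) - ln(1 + a/ȳ)·z̄²/z holds with equality at (z, y) = (z̄, ȳ). -/

import Mathlib

open Real Set

private lemma logpos {a y : ℝ} (ha : 0 < a) (hy : 0 < y) :
    0 < Real.log (1 + a / y) :=
  Real.log_pos (by nlinarith [div_pos ha hy])

private lemma log_ge {a y : ℝ} (ha : 0 < a) (hy : 0 < y) :
    a / (y + a) ≤ Real.log (1 + a / y) := by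
  have h1 : (0:ℝ) < 1 + a / y := by positivity
  have h2 := Real.log_le_sub_one_of_pos (x := (1 + a/y)⁻¹) (by positivity)
  rw [Real.log_inv] at h2
  have h3 : 1 - (1 + a/y)⁻¹ ≤ Real.log (1 + a/y) := by linarith
  have h4 : a/(y+a) = 1 - (1 + a/y)⁻¹ := by
    rw [inv_eq_one_div]
    field_simp
    ring
  rw [h4]; exact h3

private lemma hasDerivAt_L {a y : ℝ} (ha : 0 < a) (hy : 0 < y) :
    HasDerivAt (fun t => Real.log (1 + a / t)) (-a / (y * (y + a))) y := by
  have h1 : HasDerivAt (fun t : ℝ => 1 + a / t) (a * -(y^2)⁻¹) y := by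
    have := ((hasDerivAt_inv hy.ne').const_mul a).const_add 1
    simpa [div_eq_mul_inv] using this
  have hne : 1 + a / y ≠ 0 := by positivity
  have := h1.log hne
  convert this using 1
  have : 1 + a / y = (y + a) / y := by field_simp
  rw [this]
  field_simp

private lemma hasDerivAt_K {a y : ℝ} (ha : 0 < a) (hy : 0 < y) :
    HasDerivAt (fun t => (t * (t + a))^2 * Real.log (1 + a / t))
      (y * (y + a) * (2 * (2 * y + a) * Real.log (1 + a / y) - a)) y := by
  have hp : HasDerivAt (fun t : ℝ => (t * (t + a))^2)
      (2 * (y * (y + a)) ^ 1 * (1 * (y + a) + y * 1)) y :=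
    ((hasDerivAt_id y).mul ((hasDerivAt_id y).add_const a)).pow 2
  have := hp.mul (hasDerivAt_L ha hy)
  convert this using 1
  · rfl
  · rfl
  · rfl
  have h1 : y * (y + a) ≠ 0 := by positivity
  have e : (y * (y + a)) ^ 2 * (-a / (y * (y + a))) = -a * (y * (y + a)) := by
    field_simp
  rw [e]
  ring

private lemma K_mono {a : ℝ} (ha : 0 < a) :
    MonotoneOn (fun t => (t * (t + a))^2 * Real.log (1 + a / t)) (Ioi (0:ℝ)) := by
  apply monotoneOn_of_deriv_nonneg (convex_Ioi 0)
  · exact fun x hx => ((hasDerivAt_K ha hx).continuousAt).continuousWithinAt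
  · rw [interior_Ioi]
    exact fun x hx => (hasDerivAt_K ha hx).differentiableAt.differentiableWithinAt
  · rw [interior_Ioi]
    intro x hx
    rw [(hasDerivAt_K ha hx).deriv]
    have hx0 : (0:ℝ) < x := hx
    have hL := log_ge ha hx0
    have h1 : 0 < x * (x + a) := by positivity
    have hxa : (0:ℝ) < x + a := by linarith
    have h2 : 0 ≤ 2 * (2 * x + a) * Real.log (1 + a / x) - a := by
      have h6 : a ≤ 2 * (2 * x + a) * (a / (x + a)) := by
        rw [mul_div_assoc', le_div_iff₀ hxa]; nlinarith
      nlinarith [mul_le_mul_of_nonneg_left hL (by positivity : (0:ℝ) ≤ 2 * (2 * x + a))]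
    exact mul_nonneg h1.le h2

/-- derivative of `h(y) = √(log(1+a/y))` expressed via `K`. -/
private lemma hasDerivAt_h {a y : ℝ} (ha : 0 < a) (hy : 0 < y) :
    HasDerivAt (fun t => Real.sqrt (Real.log (1 + a / t)))
      (-a / (2 * Real.sqrt ((y * (y + a))^2 * Real.log (1 + a / y)))) y := by
  have hL := logpos ha hy
  have := (hasDerivAt_L ha hy).sqrt hL.ne'
  convert this using 1
  have h1 : 0 < y * (y + a) := by positivity
  rw [Real.sqrt_mul (sq_nonneg _), Real.sqrt_sq h1.le]
  have h2 : 0 < Real.sqrt (Real.log (1 + a / y)) := Real.sqrt_pos.mpr hL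
  field_simp

private lemma hd_mono {a y1 y2 : ℝ} (ha : 0 < a) (h1 : 0 < y1) (h12 : y1 ≤ y2) :
    -a / (2 * Real.sqrt ((y1 * (y1 + a))^2 * Real.log (1 + a / y1))) ≤
    -a / (2 * Real.sqrt ((y2 * (y2 + a))^2 * Real.log (1 + a / y2))) := by
  have h2 : 0 < y2 := lt_of_lt_of_le h1 h12
  have hK := K_mono ha h1 h2 h12
  have hK1 : 0 < (y1 * (y1 + a))^2 * Real.log (1 + a / y1) := by
    have := logpos ha h1
    positivity
  have hs1 : 0 < Real.sqrt ((y1 * (y1 + a))^2 * Real.log (1 + a / y1)) :=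
    Real.sqrt_pos.mpr hK1
  have hs12 : Real.sqrt ((y1 * (y1 + a))^2 * Real.log (1 + a / y1)) ≤
      Real.sqrt ((y2 * (y2 + a))^2 * Real.log (1 + a / y2)) :=
    Real.sqrt_le_sqrt hK
  have hs2 : 0 < Real.sqrt ((y2 * (y2 + a))^2 * Real.log (1 + a / y2)) :=
    lt_of_lt_of_le hs1 hs12
  have hdd : a / (2 * Real.sqrt ((y2 * (y2 + a))^2 * Real.log (1 + a / y2))) ≤
      a / (2 * Real.sqrt ((y1 * (y1 + a))^2 * Real.log (1 + a / y1))) :=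
    div_le_div_of_nonneg_left ha.le (by linarith) (by linarith)
  rw [neg_div, neg_div]
  linarith

private lemma tangent {a ybar : ℝ} (ha : 0 < a) (hyb : 0 < ybar) {y : ℝ} (hy : 0 < y) :
    Real.sqrt (Real.log (1 + a / ybar)) +
      (-a / (2 * Real.sqrt ((ybar * (ybar + a))^2 * Real.log (1 + a / ybar)))) * (y - ybar)
      ≤ Real.sqrt (Real.log (1 + a / y)) := by
  set hd : ℝ → ℝ := fun t => -a / (2 * Real.sqrt ((t * (t + a))^2 * Real.log (1 + a / t)))
    with hhd
  set h : ℝ → ℝ := fun t => Real.sqrt (Real.log (1 + a / t)) with hh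
  rcases lt_trichotomy y ybar with hlt | heq | hgt
  · obtain ⟨c, hc, hceq⟩ := exists_hasDerivAt_eq_slope h hd hlt
      (fun x hx => ((hasDerivAt_h ha (lt_of_lt_of_le hy hx.1)).continuousAt).continuousWithinAt)
      (fun x hx => hasDerivAt_h ha (lt_trans hy hx.1))
    have hc0 : 0 < c := lt_trans hy hc.1
    have hmono := hd_mono ha hc0 hc.2.le
    have h7 : hd c * (ybar - y) = h ybar - h y := by
      rw [hceq]; exact div_mul_cancel₀ _ (sub_ne_zero_of_ne (ne_of_gt hlt))
    have h8 := mul_le_mul_of_nonpos_right hmono (by linarith : y - ybar ≤ 0)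
    nlinarith [h8, h7]
  · subst heq; simp
  · obtain ⟨c, hc, hceq⟩ := exists_hasDerivAt_eq_slope h hd hgt
      (fun x hx => ((hasDerivAt_h ha (lt_of_lt_of_le hyb hx.1)).continuousAt).continuousWithinAt)
      (fun x hx => hasDerivAt_h ha (lt_trans hyb hx.1))
    have hc0 : 0 < c := lt_trans hyb hc.1
    have hmono := hd_mono ha hyb hc.1.le
    have h7 : hd c * (y - ybar) = h y - h ybar := by
      rw [hceq]; exact div_mul_cancel₀ _ (sub_ne_zero_of_ne (ne_of_gt hgt))
    have h8 := mul_le_mul_of_nonneg_right hmono (by linarith : 0 ≤ y - ybar)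
    nlinarith [h8, h7]

theorem rate_sca_lower_bound (z zbar ybar a y : ℝ)
    (hz : 0 < z) (hzb : 0 < zbar) (hyb : 0 < ybar) (ha : 0 < a) (hy : 0 < y) :
    (z * Real.log (1 + a / y) ≥
      2 * zbar * Real.log (1 + a / ybar)
      + (zbar * a) / (a + ybar) * (1 - y / ybar)
      - Real.log (1 + a / ybar) * zbar^2 / z) ∧
    (z = zbar → y = ybar →
      z * Real.log (1 + a / y) =
        2 * zbar * Real.log (1 + a / ybar)
        + (zbar * a) / (a + ybar) * (1 - y / ybar)
        - Real.log (1 + a / ybar) * zbar^2 / z) := by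
  have hLpos := logpos ha hy
  have hLbpos := logpos ha hyb
  set L := Real.log (1 + a / y) with hLdef
  set Lb := Real.log (1 + a / ybar) with hLbdef
  set S := Real.sqrt L with hSdef
  set Sb := Real.sqrt Lb with hSbdef
  have hS2 : S^2 = L := Real.sq_sqrt hLpos.le
  have hSb2 : Sb^2 = Lb := Real.sq_sqrt hLbpos.le
  have hSpos : 0 < S := Real.sqrt_pos.mpr hLpos
  have hSbpos : 0 < Sb := Real.sqrt_pos.mpr hLbpos
  have hD : 0 < ybar * (ybar + a) := by positivity
  constructor
  · have htan := tangent ha hyb hy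
    have hrw : Real.sqrt ((ybar * (ybar + a))^2 * Lb) = ybar * (ybar + a) * Sb := by
      rw [Real.sqrt_mul (sq_nonneg _), Real.sqrt_sq hD.le]
    rw [hrw] at htan
    have hmul := mul_le_mul_of_nonneg_right htan (by positivity : (0:ℝ) ≤ 2 * Sb)
    have hident : (Sb + -a / (2 * (ybar * (ybar + a) * Sb)) * (y - ybar)) * (2 * Sb)
        = 2 * Lb - a * (y - ybar) / (ybar * (ybar + a)) := by
      rw [← hSb2]; field_simp; ring
    have key : 2 * Lb - a * (y - ybar) / (ybar * (ybar + a)) ≤ 2 * S * Sb := by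
      rw [← hident]; nlinarith [hmul]
    rw [ge_iff_le, ← sub_nonneg]
    have expand : z * L - (2 * zbar * Lb + zbar * a / (a + ybar) * (1 - y / ybar)
        - Lb * zbar ^ 2 / z)
        = ((S * z - Sb * zbar)^2
            + z * zbar * (2 * S * Sb - (2 * Lb - a * (y - ybar) / (ybar * (ybar + a))))) / z := by
      rw [← hS2, ← hSb2]; field_simp; ring
    rw [expand]
    apply div_nonneg _ hz.le
    have h9 : 0 ≤ 2 * S * Sb - (2 * Lb - a * (y - ybar) / (ybar * (ybar + a))) := by
      linarith
    exact add_nonneg (sq_nonneg _) (mul_nonneg (mul_nonneg hz.le hzb.le) h9)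
  · intro hz1 hy1
    subst hz1; subst hy1
    rw [div_self hyb.ne']
    field_simp
    ring
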